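/- For every 𝕜-algebra automorphism g of R such that g − 1 and g^{-1} − 1 map I_j into I_{j+1} for all j ≥ 0, the series ln(g)(f) := Σ_{j≥1} (−1)^{j+1}(g−1)^j(f)/j converges in the filtration topology for every f ∈ R and defines a 𝕜-linear derivation ξ := ln(g) of R with ξ(I_j) ⊆ I_{j+1} for all j; moreover, for every f ∈ R with ord((g−1)(f)) < ∞ one has ord((g − 1 − ξ)(f)) > ord((g−1)(f)). -/

import Mathlib

set_option linter.unusedSectionVars false
set_option maxHeartbeats 1000000



variable {𝕜 R : Type*} [CommRing 𝕜] [Algebra ℚ 𝕜] [CommRing R] [Algebra 𝕜 R]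
  [Algebra ℚ R] [IsScalarTower ℚ 𝕜 R]

/-- Compatible families in `Π j, R ⧸ I_j`, i.e. the inverse limit `lim_← R/I_j`. -/
def compatFamilies (I : ℕ → Ideal R) (hI : Antitone I) :
    Submodule R (∀ j : ℕ, R ⧸ I j) where
  carrier := {v | ∀ j k : ℕ, ∀ h : j ≤ k,
    Submodule.mapQ (I k) (I j) LinearMap.id (fun x hx => hI h hx) (v k) = v j}
  add_mem' := by
    intro v w hv hw j k h
    simp only [Pi.add_apply, map_add, hv j k h, hw j k h]
  zero_mem' := by
    intro j k h
    simp
  smul_mem' := by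
    intro c v hv j k h
    simp only [Pi.smul_apply, map_smul, hv j k h]

/-- The canonical map `R → lim_← R/I_j`. -/
def toCompat (I : ℕ → Ideal R) (hI : Antitone I) (f : R) : compatFamilies I hI :=
  ⟨fun _ => Submodule.Quotient.mk f, fun _ _ _ => rfl⟩

/-- `ord(f) = sup {j : f ∈ I_j} ∈ ℕ ∪ {∞}`. -/
noncomputable def ordI (I : ℕ → Ideal R) (f : R) : ℕ∞ :=
  ⨆ j ∈ {j : ℕ | f ∈ I j}, (j : ℕ∞)


section Aux


open Polynomial in
lemma poly_zero_of_eval_nat_zero {A : Type*} [CommRing A] [Algebra ℚ A]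
    (p : Polynomial A) (h : ∀ n : ℕ, p.eval (n : A) = 0) : p = 0 := by
  set d := p.natDegree with hd
  set V : Matrix (Fin (d+1)) (Fin (d+1)) ℚ := Matrix.vandermonde (fun i => (i : ℚ)) with hV
  have hdet : V.det ≠ 0 := by
    rw [hV, Matrix.det_vandermonde_ne_zero_iff]
    exact fun i j hij => Fin.ext (Nat.cast_injective hij)
  have hinv : V⁻¹ * V = 1 := Matrix.nonsing_inv_mul V (isUnit_iff_ne_zero.2 hdet)
  have h1 : ∀ n : Fin (d+1), ∑ s : Fin (d+1), V n s • p.coeff s = 0 := by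
    intro n
    have := h n
    rw [eval_eq_sum_range] at this
    rw [← hd] at this
    rw [← Fin.sum_univ_eq_sum_range (fun i => p.coeff i * (n:A)^i)] at this
    rw [← this]
    apply Finset.sum_congr rfl
    intro s _
    rw [hV, Matrix.vandermonde]
    simp only [Matrix.of_apply]
    rw [Algebra.smul_def, map_pow, map_natCast, mul_comm]
  have h2 : ∀ t : Fin (d+1), p.coeff t = 0 := by
    intro t
    have key : ∑ n : Fin (d+1), (V⁻¹ t n) • (∑ s : Fin (d+1), V n s • p.coeff s) = 0 := by
      simp only [h1, smul_zero, Finset.sum_const_zero]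
    calc p.coeff t = ∑ s : Fin (d+1), ((V⁻¹ * V) t s) • p.coeff s := by
          rw [hinv]
          simp [Matrix.one_apply]
      _ = 0 := by
          rw [← key]
          simp only [Finset.smul_sum, smul_smul, Matrix.mul_apply, Finset.sum_smul]
          exact Finset.sum_comm
  ext n
  rcases le_or_gt n d with hn | hn
  · simpa using h2 ⟨n, Nat.lt_succ_of_le hn⟩
  · simp [Polynomial.coeff_eq_zero_of_natDegree_lt hn]

open Polynomial in
noncomputable def bp (k : ℕ) : Polynomial ℚ := ((k.factorial : ℚ)⁻¹) • descPochhammer ℚ k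

open Polynomial in
lemma bp_eval (n k : ℕ) : (bp k).eval (n : ℚ) = (n.choose k : ℚ) := by
  rw [bp, eval_smul, smul_eq_mul, descPochhammer_eval_eq_descFactorial,
    Nat.descFactorial_eq_factorial_mul_choose]
  push_cast
  rw [← mul_assoc, inv_mul_cancel₀ (by exact_mod_cast k.factorial_ne_zero), one_mul]

open Polynomial in
lemma bp_coeff_zero (k : ℕ) : (bp k).coeff 0 = if k = 0 then 1 else 0 := by
  rw [bp, coeff_smul, coeff_zero_eq_eval_zero, descPochhammer_eval_zero]
  rcases Nat.eq_zero_or_pos k with h | h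
  · simp [h]
  · simp [Nat.pos_iff_ne_zero.mp h]

open Polynomial in
lemma descPochhammer_coeff_one (k : ℕ) (hk : 1 ≤ k) :
    (descPochhammer ℚ k).coeff 1 = (-1)^(k+1) * ((k-1).factorial : ℚ) := by
  induction k with
  | zero => omega
  | succ k ih =>
    rcases Nat.eq_zero_or_pos k with h | h
    · subst h; simp [descPochhammer_one]
    · rw [descPochhammer_succ_right, mul_sub, coeff_sub]
      have h1 : (descPochhammer ℚ k * X).coeff 1 = (descPochhammer ℚ k).coeff 0 := by
        rw [coeff_mul_X]
      have h2 : (descPochhammer ℚ k * (k : ℚ[X])).coeff 1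
          = (descPochhammer ℚ k).coeff 1 * (k : ℚ) := by
        rw [← C_eq_natCast, coeff_mul_C]
      rw [h1, h2, ih h, coeff_zero_eq_eval_zero,
        descPochhammer_ne_zero_eval_zero (R := ℚ) (Nat.pos_iff_ne_zero.mp h)]
      have : k - 1 + 1 = k := Nat.succ_pred_eq_of_pos h
      rw [show k + 1 + 1 = (k + 1) + 1 from rfl]
      rw [show (k+1) - 1 = k from rfl]
      have hfac : (k.factorial : ℚ) = (k : ℚ) * ((k-1).factorial : ℚ) := by
        conv_lhs => rw [← this]
        rw [Nat.factorial_succ]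
        push_cast [this]
        ring
      rw [hfac]
      ring

open Polynomial in
lemma bp_coeff_one (k : ℕ) (hk : 1 ≤ k) : (bp k).coeff 1 = (-1)^(k+1) / (k : ℚ) := by
  rw [bp, coeff_smul, smul_eq_mul, descPochhammer_coeff_one k hk]
  have h0 : k.factorial = k * (k-1).factorial := by
    cases k with
    | zero => omega
    | succ k => simp [Nat.factorial_succ]
  have h1 : (k.factorial : ℚ) = (k : ℚ) * ((k-1).factorial : ℚ) := by exact_mod_cast congrArg (Nat.cast : ℕ → ℚ) h0
  have h2 : ((k-1).factorial : ℚ) ≠ 0 := by exact_mod_cast Nat.factorial_ne_zero _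
  have h3 : (k : ℚ) ≠ 0 := by exact_mod_cast Nat.pos_iff_ne_zero.mp hk
  field_simp [h1]
  rw [h1]; ring

noncomputable def Dop (g : R ≃ₐ[𝕜] R) : Module.End 𝕜 R := g.toLinearMap - LinearMap.id

lemma Dop_apply (g : R ≃ₐ[𝕜] R) (x : R) : Dop g x = g x - x := rfl

noncomputable def pLog (g : R ≃ₐ[𝕜] R) (n : ℕ) (f : R) : R :=
  ∑ j ∈ Finset.Icc 1 n,
    ((((-1 : ℚ) ^ (j + 1)) / (j : ℚ)) • (((Dop g) ^ j) f))

lemma Dpow_mem (I : ℕ → Ideal R) (g : R ≃ₐ[𝕜] R)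
    (hg : ∀ j : ℕ, ∀ f ∈ I j, g f - f ∈ I (j + 1)) :
    ∀ j k : ℕ, ∀ x ∈ I k, ((Dop g) ^ j) x ∈ I (k + j) := by
  intro j
  induction j with
  | zero => intro k x hx; simpa using hx
  | succ j ih =>
    intro k x hx
    have h1 : ((Dop g) ^ (j+1)) x = ((Dop g) ^ j) (Dop g x) := by
      rw [pow_succ, Module.End.mul_apply]
    rw [h1]
    have := ih (k+1) (Dop g x) (by rw [Dop_apply]; exact hg k x hx)
    convert this using 2
    omega

lemma Dpow_mem' (I : ℕ → Ideal R) (hI0 : I 0 = ⊤) (g : R ≃ₐ[𝕜] R)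
    (hg : ∀ j : ℕ, ∀ f ∈ I j, g f - f ∈ I (j + 1)) (j : ℕ) (x : R) :
    ((Dop g) ^ j) x ∈ I j := by
  have := Dpow_mem I g hg j 0 x (by rw [hI0]; trivial)
  simpa using this

lemma gpow_eq_sum (g : R ≃ₐ[𝕜] R) (n : ℕ) (x : R) :
    (g ^ n) x = ∑ k ∈ Finset.range (n+1), (n.choose k) • (((Dop g) ^ k) x) := by
  have hcomm : Commute (Dop g) (1 : Module.End 𝕜 R) := Commute.one_right _
  have hg1 : ∀ y : R, ((Dop g) + 1) y = g y := by
    intro y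
    simp [Dop_apply, LinearMap.add_apply, sub_add_cancel]
  have hgn : ∀ y : R, (((Dop g) + 1) ^ n) y = (g ^ n) y := by
    induction n with
    | zero => intro y; simp
    | succ n ihn =>
      intro y
      rw [pow_succ', pow_succ', Module.End.mul_apply, hg1]
      rw [show ((g : R ≃ₐ[𝕜] R) * g ^ n) y = g ((g ^ n) y) from rfl]
      rw [ihn]
  have hb : ((Dop g) + 1) ^ n
      = ∑ k ∈ Finset.range (n+1), (Dop g) ^ k * 1 ^ (n - k) * (n.choose k : Module.End 𝕜 R) :=
    hcomm.add_pow n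
  rw [← hgn x, hb]
  rw [LinearMap.sum_apply]
  apply Finset.sum_congr rfl
  intro k _
  simp only [Module.End.mul_apply, Module.End.natCast_apply, one_pow, mul_one]
  exact map_nsmul _ _ _

lemma coeff_one_mul {A : Type*} [CommRing A] (p q : Polynomial A) :
    (p * q).coeff 1 = p.coeff 0 * q.coeff 1 + p.coeff 1 * q.coeff 0 := by
  rw [Polynomial.coeff_mul]
  rw [show (1 : ℕ) = 0 + 1 from rfl, Finset.Nat.antidiagonal_succ]
  simp [Finset.Nat.antidiagonal_zero, Prod.map]
  try ring

lemma sum_bp_coeff_one {A : Type*} [CommRing A] [Algebra ℚ A] (m : ℕ) (v : ℕ → A) :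
    ∑ k ∈ Finset.range (m+1), algebraMap ℚ A ((bp k).coeff 1) * v k
      = ∑ k ∈ Finset.Icc 1 m, algebraMap ℚ A ((-1)^(k+1) / (k : ℚ)) * v k := by
  have hins : Finset.range (m+1) = insert 0 (Finset.Icc 1 m) := by
    ext x; simp [Finset.mem_range, Finset.mem_Icc]; omega
  have h0 : (bp 0).coeff 1 = 0 := by
    simp [bp, descPochhammer_zero, Polynomial.coeff_one]
  rw [hins, Finset.sum_insert (by simp), h0, map_zero, zero_mul, zero_add]
  exact Finset.sum_congr rfl fun k hk => by rw [bp_coeff_one k (Finset.mem_Icc.mp hk).1]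

open Polynomial in
lemma pLog_leibniz (I : ℕ → Ideal R) (hI0 : I 0 = ⊤) (hIan : Antitone I)
    (hImul : ∀ j k : ℕ, I j * I k ≤ I (j + k))
    (g : R ≃ₐ[𝕜] R) (hg : ∀ j : ℕ, ∀ f ∈ I j, g f - f ∈ I (j + 1))
    (m : ℕ) (a b : R) :
    pLog g m (a * b) - (a * pLog g m b + b * pLog g m a) ∈ I m := by
  set A := R ⧸ I m with hA
  set φ : R →ₐ[ℚ] A := Ideal.Quotient.mkₐ ℚ (I m) with hφ
  set D : Module.End 𝕜 R := Dop g with hD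
  have f1 : ∀ k : ℕ, m ≤ k → ∀ t : R, φ ((D ^ k) t) = 0 := by
    intro k hk t
    rw [hφ, Ideal.Quotient.mkₐ_eq_mk, Ideal.Quotient.eq_zero_iff_mem]
    exact hIan hk (Dpow_mem' I hI0 g hg k t)
  have f2 : ∀ i j : ℕ, m ≤ i + j → φ ((D ^ i) a * (D ^ j) b) = 0 := by
    intro i j hij
    rw [hφ, Ideal.Quotient.mkₐ_eq_mk, Ideal.Quotient.eq_zero_iff_mem]
    exact hIan hij (hImul i j
      (Ideal.mul_mem_mul (Dpow_mem' I hI0 g hg i a) (Dpow_mem' I hI0 g hg j b)))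
  set bpA : ℕ → Polynomial A := fun k => (bp k).map (algebraMap ℚ A) with hbpA
  have f3 : ∀ n k : ℕ, (bpA k).eval (n : A) = ((n.choose k : ℕ) : A) := by
    intro n k
    rw [hbpA]
    simp only
    rw [eval_map, Polynomial.eval₂_at_natCast, bp_eval, map_natCast]
  -- expansion of φ (g^n t)
  have hφg : ∀ (n : ℕ) (t : R) (M : ℕ), n ≤ M →
      φ ((g ^ n) t) = ∑ k ∈ Finset.range (M+1), ((n.choose k : ℕ) : A) * φ ((D^k) t) := by
    intro n t M hM
    rw [gpow_eq_sum, map_sum]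
    have e : ∀ k : ℕ, φ ((n.choose k) • ((D^k) t)) = ((n.choose k : ℕ) : A) * φ ((D^k) t) := by
      intro k; rw [map_nsmul, nsmul_eq_mul]
    rw [Finset.sum_congr rfl (fun k _ => e k)]
    apply Finset.sum_subset (Finset.range_subset_range.2 (by omega))
    intro k hk hk'
    have : n < k := by simp only [Finset.mem_range] at hk hk' ⊢; omega
    rw [Nat.choose_eq_zero_of_lt this, Nat.cast_zero, zero_mul]
  set P : Polynomial A :=
    ∑ k ∈ Finset.range (m+1), bpA k * C (φ ((D ^ k) (a * b))) with hP
  set Q : Polynomial A := ∑ i ∈ Finset.range (m+1), ∑ j ∈ Finset.range (m+1),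
      (bpA i * bpA j) * C (φ ((D ^ i) a * (D ^ j) b)) with hQ
  have evalP : ∀ n : ℕ, P.eval (n : A) = φ ((g ^ n) (a * b)) := by
    intro n
    rw [hP, eval_finset_sum]
    simp only [eval_mul, eval_C, f3]
    rw [hφg n (a*b) (max n m) (le_max_left _ _)]
    apply Finset.sum_subset (Finset.range_subset_range.2 (by omega))
    intro k hk hk'
    have : m ≤ k := by simp only [Finset.mem_range] at hk hk' ⊢; omega
    rw [f1 k this, mul_zero]
  have evalQ : ∀ n : ℕ, Q.eval (n : A) = φ ((g ^ n) a) * φ ((g ^ n) b) := by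
    intro n
    set M := max n m with hM
    have hnM : n ≤ M := le_max_left _ _
    rw [hφg n a M hnM, hφg n b M hnM, Finset.sum_mul_sum]
    rw [hQ]
    simp only [eval_finset_sum]
    have inner : ∀ i ∈ Finset.range (m+1),
        (∑ j ∈ Finset.range (m+1), eval (n:A) ((bpA i * bpA j) * C (φ ((D ^ i) a * (D ^ j) b))))
        = ∑ j ∈ Finset.range (M+1),
            ((n.choose i : ℕ) : A) * φ ((D^i) a) * (((n.choose j : ℕ) : A) * φ ((D^j) b)) := by
      intro i _
      have e : ∀ j : ℕ, eval (n:A) ((bpA i * bpA j) * C (φ ((D ^ i) a * (D ^ j) b)))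
          = ((n.choose i : ℕ) : A) * φ ((D^i) a) * (((n.choose j : ℕ) : A) * φ ((D^j) b)) := by
        intro j
        rw [eval_mul, eval_mul, eval_C, f3, f3, map_mul]
        ring
      rw [Finset.sum_congr rfl (fun j _ => e j)]
      apply Finset.sum_subset (Finset.range_subset_range.2 (by omega))
      intro j hj hj'
      have hmj : m ≤ i + j := by simp only [Finset.mem_range] at hj hj'; omega
      have : φ ((D^i) a) * φ ((D^j) b) = 0 := by rw [← map_mul, f2 i j hmj]
      calc ((n.choose i : ℕ) : A) * φ ((D^i) a) * (((n.choose j : ℕ) : A) * φ ((D^j) b))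
          = ((n.choose i : ℕ) : A) * ((n.choose j : ℕ) : A) * (φ ((D^i) a) * φ ((D^j) b)) := by ring
        _ = 0 := by rw [this, mul_zero]
    rw [Finset.sum_congr rfl inner]
    apply Finset.sum_subset (Finset.range_subset_range.2 (by omega))
    intro i hi hi'
    apply Finset.sum_eq_zero
    intro j _
    have hmj : m ≤ i + j := by simp only [Finset.mem_range] at hi hi'; omega
    have : φ ((D^i) a) * φ ((D^j) b) = 0 := by rw [← map_mul, f2 i j hmj]
    calc ((n.choose i : ℕ) : A) * φ ((D^i) a) * (((n.choose j : ℕ) : A) * φ ((D^j) b))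
        = ((n.choose i : ℕ) : A) * ((n.choose j : ℕ) : A) * (φ ((D^i) a) * φ ((D^j) b)) := by ring
      _ = 0 := by rw [this, mul_zero]
  have hPQ : P = Q := by
    have h0 := poly_zero_of_eval_nat_zero (P - Q) (fun n => by
      rw [eval_sub, evalP n, evalQ n, ← map_mul φ, ← map_mul (g ^ n), sub_self])
    exact sub_eq_zero.mp h0
  have hsmul : ∀ (q : ℚ) (x : R), φ (q • x) = algebraMap ℚ A q * φ x := by
    intro q x
    rw [map_smul, Algebra.smul_def]
  have e0 : ∀ k : ℕ, algebraMap ℚ A ((bp k).coeff 0) = if k = 0 then 1 else 0 := by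
    intro k; rw [bp_coeff_zero]; split <;> simp
  have coeffP : P.coeff 1 = φ (pLog g m (a * b)) := by
    rw [hP, finset_sum_coeff]
    simp only [coeff_mul_C, hbpA, coeff_map]
    rw [sum_bp_coeff_one]
    rw [pLog, map_sum]
    exact Finset.sum_congr rfl fun k _ => (hsmul _ _).symm
  have hmulpLog : ∀ (x f : R), x * pLog g m f
      = ∑ j ∈ Finset.Icc 1 m, ((-1:ℚ)^(j+1)/(j:ℚ)) • (x * ((D^j) f)) := by
    intro x f
    rw [pLog, Finset.mul_sum]
    exact Finset.sum_congr rfl fun j _ => mul_smul_comm _ _ _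
  have coeffQ : Q.coeff 1 = φ (a * pLog g m b) + φ (b * pLog g m a) := by
    rw [hQ]
    simp only [finset_sum_coeff]
    simp only [coeff_mul_C]
    simp only [coeff_one_mul, hbpA, coeff_map]
    simp only [add_mul, Finset.sum_add_distrib]
    congr 1
    · -- first double sum: collapse i = 0
      rw [Finset.sum_eq_single_of_mem 0 (Finset.mem_range.mpr (by omega))]
      · rw [hmulpLog a b, map_sum]
        simp only [e0, if_pos rfl, if_true, one_mul, pow_zero, Module.End.one_apply]
        rw [sum_bp_coeff_one]
        exact Finset.sum_congr rfl fun j _ => by rw [hsmul]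
      · intro i _ hi
        apply Finset.sum_eq_zero
        intro j _
        rw [e0, if_neg hi, zero_mul, zero_mul]
    · -- second double sum: collapse j = 0
      have inner2 : ∀ i ∈ Finset.range (m+1),
          (∑ j ∈ Finset.range (m+1),
            algebraMap ℚ A ((bp i).coeff 1) * algebraMap ℚ A ((bp j).coeff 0)
              * φ ((D ^ i) a * (D ^ j) b))
          = algebraMap ℚ A ((bp i).coeff 1) * φ (b * ((D ^ i) a)) := by
        intro i _
        rw [Finset.sum_eq_single_of_mem 0 (Finset.mem_range.mpr (by omega))]
        · rw [e0, if_pos rfl, mul_one, pow_zero, Module.End.one_apply, mul_comm ((D ^ i) a) b]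
        · intro j _ hj
          rw [e0, if_neg hj, mul_zero, zero_mul]
      rw [Finset.sum_congr rfl inner2]
      rw [hmulpLog b a, map_sum, sum_bp_coeff_one]
      exact Finset.sum_congr rfl fun j _ => by rw [hsmul]
  have hfin : φ (pLog g m (a * b) - (a * pLog g m b + b * pLog g m a)) = 0 := by
    rw [map_sub, map_add, ← coeffP, ← coeffQ, hPQ, sub_self]
  rw [hφ, Ideal.Quotient.mkₐ_eq_mk, Ideal.Quotient.eq_zero_iff_mem] at hfin
  exact hfin


lemma q_smul_mem (J : Ideal R) (q : ℚ) {x : R} (hx : x ∈ J) : q • x ∈ J := by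
  rw [Algebra.smul_def]; exact J.mul_mem_left _ hx

lemma k_smul_mem (J : Ideal R) (c : 𝕜) {x : R} (hx : x ∈ J) : c • x ∈ J := by
  rw [Algebra.smul_def]; exact J.mul_mem_left _ hx

lemma pLog_mem (I : ℕ → Ideal R) (hI0 : I 0 = ⊤) (hIan : Antitone I) (g : R ≃ₐ[𝕜] R)
    (hg : ∀ j : ℕ, ∀ f ∈ I j, g f - f ∈ I (j + 1)) {j : ℕ} {f : R} (hf : f ∈ I j) (n : ℕ) :
    pLog g n f ∈ I (j + 1) := by
  apply Submodule.sum_mem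
  intro k hk
  apply q_smul_mem
  have h1 : (1:ℕ) ≤ k := (Finset.mem_Icc.mp hk).1
  exact hIan (by omega) (Dpow_mem I g hg k j f hf)

lemma pLog_sub_mem (I : ℕ → Ideal R) (hI0 : I 0 = ⊤) (hIan : Antitone I) (g : R ≃ₐ[𝕜] R)
    (hg : ∀ j : ℕ, ∀ f ∈ I j, g f - f ∈ I (j + 1)) {m n : ℕ} (h : m ≤ n) (f : R) :
    pLog g n f - pLog g m f ∈ I m := by
  have hsub : Finset.Icc 1 m ⊆ Finset.Icc 1 n := Finset.Icc_subset_Icc_right h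
  rw [pLog, pLog, ← Finset.sum_sdiff hsub, add_sub_cancel_right]
  apply Submodule.sum_mem
  intro k hk
  apply q_smul_mem
  have hk1 : m < k := by
    simp only [Finset.mem_sdiff, Finset.mem_Icc] at hk; omega
  exact hIan (le_of_lt hk1) (Dpow_mem' I hI0 g hg k f)

lemma pLog_add (g : R ≃ₐ[𝕜] R) (m : ℕ) (x y : R) :
    pLog g m (x + y) = pLog g m x + pLog g m y := by
  simp [pLog, smul_add, map_add, Finset.sum_add_distrib]

lemma pLog_smul (g : R ≃ₐ[𝕜] R) (m : ℕ) (c : 𝕜) (x : R) :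
    pLog g m (c • x) = c • pLog g m x := by
  rw [pLog, pLog, Finset.smul_sum]
  apply Finset.sum_congr rfl
  intro j _
  rw [map_smul]
  calc ((-1:ℚ)^(j+1)/(j:ℚ)) • (c • ((Dop g ^ j) x))
      = algebraMap ℚ R ((-1:ℚ)^(j+1)/(j:ℚ)) * (c • ((Dop g ^ j) x)) := Algebra.smul_def _ _
    _ = c • (algebraMap ℚ R ((-1:ℚ)^(j+1)/(j:ℚ)) * ((Dop g ^ j) x)) := mul_smul_comm _ _ _
    _ = c • (((-1:ℚ)^(j+1)/(j:ℚ)) • ((Dop g ^ j) x)) := by rw [← Algebra.smul_def]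

lemma pLog_one (g : R ≃ₐ[𝕜] R) (m : ℕ) : pLog g m 1 = 0 := by
  rw [pLog]
  apply Finset.sum_eq_zero
  intro j hj
  obtain ⟨k, rfl⟩ : ∃ k, j = k + 1 := ⟨j - 1, by have := (Finset.mem_Icc.mp hj).1; omega⟩
  have : ((Dop g) ^ (k+1)) (1 : R) = 0 := by
    rw [pow_succ, Module.End.mul_apply, Dop_apply, map_one, sub_self, map_zero]
  rw [this, smul_zero]

end Aux

/-- over a ring containing ℚ, for a separated complete filtered ring and a
topologically unipotent 𝕜-algebra automorphism `g` (i.e. `g − 1` and `g⁻¹ − 1` map `I_j`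
into `I_{j+1}`), the logarithmic series `ln(g)` converges in the filtration topology and
defines a 𝕜-linear derivation `ξ` with `ξ(I_j) ⊆ I_{j+1}`, and moreover
`ord((g − 1 − ξ)(f)) > ord((g−1)(f))` whenever `ord((g−1)(f)) < ∞`. -/
theorem statement5
    (I : ℕ → Ideal R) (hI0 : I 0 = ⊤) (hIan : Antitone I)
    (hImul : ∀ j k : ℕ, I j * I k ≤ I (j + k))
    (hcomplete : Function.Bijective (toCompat I hIan))
    (g : R ≃ₐ[𝕜] R)
    (hg : ∀ j : ℕ, ∀ f ∈ I j, g f - f ∈ I (j + 1))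
    (hg' : ∀ j : ℕ, ∀ f ∈ I j, g.symm f - f ∈ I (j + 1)) :
    ∃ ξ : Derivation 𝕜 R R,
      (∀ f : R, ∀ m : ℕ, ∃ n₀ : ℕ, ∀ n ≥ n₀,
        ξ f - ∑ j ∈ Finset.Icc 1 n,
          ((((-1 : ℚ) ^ (j + 1)) / (j : ℚ)) •
            (((g.toLinearMap - LinearMap.id : Module.End 𝕜 R) ^ j) f)) ∈ I m) ∧
      (∀ j : ℕ, ∀ f ∈ I j, ξ f ∈ I (j + 1)) ∧
      (∀ f : R, ordI I (g f - f) < ⊤ →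
        ordI I (g f - f - ξ f) > ordI I (g f - f)) := by
  classical
  have hfam : ∀ f : R, (fun m => Submodule.Quotient.mk (pLog g m f) : ∀ j : ℕ, R ⧸ I j)
      ∈ compatFamilies I hIan := by
    intro f j k hjk
    rw [Submodule.mapQ_apply, LinearMap.id_apply, Submodule.Quotient.eq]
    exact pLog_sub_mem I hI0 hIan g hg hjk f
  choose ξ₀ hξ₀ using fun f : R => hcomplete.2 ⟨_, hfam f⟩
  have key : ∀ (f : R) (m : ℕ), ξ₀ f - pLog g m f ∈ I m := by
    intro f m
    have h1 : Submodule.Quotient.mk (p := I m) (ξ₀ f) = Submodule.Quotient.mk (pLog g m f) :=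
      congrFun (congrArg Subtype.val (hξ₀ f)) m
    exact (Submodule.Quotient.eq _).mp h1
  have sep : ∀ x : R, (∀ m : ℕ, x ∈ I m) → x = 0 := by
    intro x hx
    apply hcomplete.1
    apply Subtype.ext
    funext m
    show Submodule.Quotient.mk x = Submodule.Quotient.mk (0 : R)
    rw [Submodule.Quotient.eq]
    simpa using hx m
  have hadd : ∀ x y : R, ξ₀ (x + y) = ξ₀ x + ξ₀ y := by
    intro x y
    rw [← sub_eq_zero]
    apply sep
    intro m
    have he : ξ₀ (x + y) - (ξ₀ x + ξ₀ y)
        = (ξ₀ (x + y) - pLog g m (x + y)) - (ξ₀ x - pLog g m x) - (ξ₀ y - pLog g m y) := by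
      rw [pLog_add]; ring
    rw [he]
    exact sub_mem (sub_mem (key _ m) (key _ m)) (key _ m)
  have hsmul : ∀ (c : 𝕜) (x : R), ξ₀ (c • x) = c • ξ₀ x := by
    intro c x
    rw [← sub_eq_zero]
    apply sep
    intro m
    have he : ξ₀ (c • x) - c • ξ₀ x
        = (ξ₀ (c • x) - pLog g m (c • x)) - c • (ξ₀ x - pLog g m x) := by
      rw [pLog_smul, smul_sub]; ring
    rw [he]
    exact sub_mem (key _ m) (k_smul_mem _ c (key _ m))
  have hone : ξ₀ 1 = 0 := by
    apply sep
    intro m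
    have := key 1 m
    rwa [pLog_one, sub_zero] at this
  have hleib : ∀ x y : R, ξ₀ (x * y) = x * ξ₀ y + y * ξ₀ x := by
    intro x y
    rw [← sub_eq_zero]
    apply sep
    intro m
    have he : ξ₀ (x * y) - (x * ξ₀ y + y * ξ₀ x)
        = (ξ₀ (x * y) - pLog g m (x * y))
          + (pLog g m (x * y) - (x * pLog g m y + y * pLog g m x))
          - x * (ξ₀ y - pLog g m y) - y * (ξ₀ x - pLog g m x) := by
      ring
    rw [he]
    exact sub_mem (sub_mem (add_mem (key _ m) (pLog_leibniz I hI0 hIan hImul g hg m x y))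
      (Ideal.mul_mem_left _ x (key y m))) (Ideal.mul_mem_left _ y (key x m))
  let ξlin : R →ₗ[𝕜] R :=
    { toFun := ξ₀, map_add' := hadd, map_smul' := hsmul }
  let ξ : Derivation 𝕜 R R :=
    { toLinearMap := ξlin
      map_one_eq_zero' := hone
      leibniz' := by
        intro x y
        show ξ₀ (x * y) = x • ξ₀ y + y • ξ₀ x
        rw [smul_eq_mul, smul_eq_mul]
        exact hleib x y }
  have hξapp : ∀ f : R, ξ f = ξ₀ f := fun _ => rfl
  refine ⟨ξ, ?_, ?_, ?_⟩
  · -- convergence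
    intro f m
    refine ⟨m, fun n hn => ?_⟩
    have he : ξ f - ∑ j ∈ Finset.Icc 1 n,
          ((((-1 : ℚ) ^ (j + 1)) / (j : ℚ)) •
            (((g.toLinearMap - LinearMap.id : Module.End 𝕜 R) ^ j) f))
        = (ξ₀ f - pLog g m f) - (pLog g n f - pLog g m f) := by
      rw [hξapp]
      rw [show (∑ j ∈ Finset.Icc 1 n,
          ((((-1 : ℚ) ^ (j + 1)) / (j : ℚ)) •
            (((g.toLinearMap - LinearMap.id : Module.End 𝕜 R) ^ j) f))) = pLog g n f from rfl]
      ring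
    rw [he]
    exact sub_mem (key f m) (pLog_sub_mem I hI0 hIan g hg hn f)
  · -- ξ (I j) ⊆ I (j+1)
    intro j f hf
    have he : ξ f = (ξ₀ f - pLog g (j+1) f) + pLog g (j+1) f := by rw [hξapp]; ring
    rw [he]
    exact add_mem (key f (j+1)) (pLog_mem I hI0 hIan g hg hf (j+1))
  · -- order statement
    intro f hford
    set u : R := g f - f with hu
    have hDf : (Dop g) f = u := rfl
    obtain ⟨N, hN⟩ : ∃ N : ℕ, ordI I u = (N : ℕ∞) := by
      rcases WithTop.ne_top_iff_exists.mp (ne_of_lt hford) with ⟨N, hN⟩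
      exact ⟨N, hN.symm⟩
    have hmemle : ∀ j : ℕ, u ∈ I j → (j : ℕ∞) ≤ ordI I u := by
      intro j hj
      exact le_iSup₂ (f := fun (j : ℕ) (_ : j ∈ {j : ℕ | u ∈ I j}) => (j : ℕ∞)) j hj
    have hjleN : ∀ j : ℕ, u ∈ I j → j ≤ N := by
      intro j hj
      have := hmemle j hj
      rw [hN] at this
      exact_mod_cast this
    have huN : u ∈ I N := by
      by_contra hc
      have hN1 : 1 ≤ N := by
        by_contra hN0
        push_neg at hN0
        interval_cases N
        exact hc (by rw [hI0]; trivial)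
      have hlt : ∀ j : ℕ, u ∈ I j → (j : ℕ∞) ≤ ((N - 1 : ℕ) : ℕ∞) := by
        intro j hj
        have h1 : j ≤ N := hjleN j hj
        have h2 : j ≠ N := fun h => hc (h ▸ hj)
        have h3 : j ≤ N - 1 := by omega
        exact Nat.cast_le.mpr h3
      have : ordI I u ≤ ((N - 1 : ℕ) : ℕ∞) := by
        rw [ordI]
        exact iSup₂_le hlt
      rw [hN] at this
      have : N ≤ N - 1 := by exact_mod_cast this
      omega
    have hDfmem : ∀ k : ℕ, ((Dop g) ^ (k + 2)) f ∈ I (N + 1) := by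
      intro k
      have h1 : ((Dop g) ^ (k + 2)) f = ((Dop g) ^ (k + 1)) ((Dop g) f) := by
        rw [pow_succ, Module.End.mul_apply]
      rw [h1, hDf]
      exact hIan (by omega) (Dpow_mem I g hg (k+1) N u huN)
    have hsplit : pLog g (N+1) f - u ∈ I (N + 1) := by
      have hins : Finset.Icc 1 (N+1) = insert 1 (Finset.Icc 2 (N+1)) := by
        ext x
        simp only [Finset.mem_Icc, Finset.mem_insert]
        omega
      have h1 : ((((-1 : ℚ) ^ (1 + 1)) / ((1 : ℕ) : ℚ)) •
          (((Dop g) ^ 1) f)) = (Dop g) f := by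
        norm_num
      rw [pLog, hins, Finset.sum_insert (by simp), h1, hDf, add_sub_cancel_left]
      apply Submodule.sum_mem
      intro j hj
      obtain ⟨k, rfl⟩ : ∃ k, j = k + 2 := ⟨j - 2, by have := (Finset.mem_Icc.mp hj).1; omega⟩
      exact q_smul_mem _ _ (hDfmem k)
    have hfinal : u - ξ f ∈ I (N + 1) := by
      have he : u - ξ f = -(ξ₀ f - pLog g (N+1) f) - (pLog g (N+1) f - u) := by
        rw [hξapp]; ring
      rw [he]
      exact sub_mem (neg_mem (key f (N+1))) hsplit
    have hge : ((N + 1 : ℕ) : ℕ∞) ≤ ordI I (u - ξ f) :=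
      le_iSup₂ (f := fun (j : ℕ) (_ : j ∈ {j : ℕ | u - ξ f ∈ I j}) => (j : ℕ∞)) (N+1) hfinal
    have : ordI I (g f - f - ξ f) = ordI I (u - ξ f) := rfl
    rw [this, hN]
    calc (N : ℕ∞) < ((N + 1 : ℕ) : ℕ∞) := by exact_mod_cast Nat.lt_succ_self N
      _ ≤ ordI I (u - ξ f) := hge
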